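/- Let E be a connected component of {z : |P(z)| ≤ 1} for a polynomial P of degree n, and suppose every critical point ζ ∈ E of P satisfies P(ζ) = 0. Then all zeros of P lying in E coincide: E contains exactly one distinct zero of P. -/

import Mathlib

open Set Filter Topology Polynomial

lemma nested_connected_inter {K : ℕ → Set ℂ} (hK : ∀ n, IsCompact (K n))
    (hcl : ∀ n, IsClosed (K n)) (hco : ∀ n, IsPreconnected (K n))
    (hne : ∀ n, (K n).Nonempty) (hanti : ∀ n, K (n+1) ⊆ K n) :
    IsPreconnected (⋂ n, K n) := by
  set C := ⋂ n, K n with hC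
  have hCcl : IsClosed C := isClosed_iInter hcl
  have hCK : ∀ n, C ⊆ K n := fun n => iInter_subset K n
  have hCcomp : IsCompact C := (hK 0).of_isClosed_subset hCcl (hCK 0)
  rintro u v hu hv hcov ⟨x, hxC, hxu⟩ ⟨y, hyC, hyv⟩
  by_contra hcon
  have hempty : C ∩ (u ∩ v) = ∅ := by
    by_contra h
    exact hcon (nonempty_iff_ne_empty.2 h)
  set A := C \ v with hA
  set B := C \ u with hB
  have hAcl : IsClosed A := hCcl.sdiff hv
  have hBcl : IsClosed B := hCcl.sdiff hu
  have hAcomp : IsCompact A := hCcomp.of_isClosed_subset hAcl diff_subset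
  have hBcomp : IsCompact B := hCcomp.of_isClosed_subset hBcl diff_subset
  have hdisj : Disjoint A B := by
    rw [Set.disjoint_iff]
    rintro z ⟨⟨hzC, hzv⟩, _, hzu⟩
    rcases hcov hzC with h | h
    exacts [hzu h, hzv h]
  obtain ⟨u', v', hu', hv', hAu', hBv', hdisj'⟩ :=
    SeparatedNhds.of_isCompact_isCompact hAcomp hBcomp hdisj
  have hCsub : C ⊆ u' ∪ v' := by
    intro z hz
    rcases hcov hz with h | h
    · have : z ∈ A := ⟨hz, fun hzv => (eq_empty_iff_forall_notMem.1 hempty z) ⟨hz, h, hzv⟩⟩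
      exact Or.inl (hAu' this)
    · have : z ∈ B := ⟨hz, fun hzu => (eq_empty_iff_forall_notMem.1 hempty z) ⟨hz, hzu, h⟩⟩
      exact Or.inr (hBv' this)
  -- find N with K N ⊆ u' ∪ v'
  have : ∃ N, K N ⊆ u' ∪ v' := by
    by_contra h
    push_neg at h
    have hne' : ∀ n, (K n \ (u' ∪ v')).Nonempty := by
      intro n
      rcases not_subset.1 (h n) with ⟨z, hz1, hz2⟩
      exact ⟨z, hz1, hz2⟩
    have := IsCompact.nonempty_iInter_of_sequence_nonempty_isCompact_isClosed
      (fun n => K n \ (u' ∪ v')) (fun n => diff_subset_diff_left (hanti n)) hne'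
      ((hK 0).of_isClosed_subset ((hcl 0).sdiff (hu'.union hv')) diff_subset)
      (fun n => (hcl n).sdiff (hu'.union hv'))
    rcases this with ⟨z, hz⟩
    simp only [Set.mem_iInter, Set.mem_diff] at hz
    exact (hz 0).2 (hCsub (Set.mem_iInter.2 fun n => (hz n).1))
  obtain ⟨N, hN⟩ := this
  have hxA : x ∈ A := ⟨hxC, fun hxv => (eq_empty_iff_forall_notMem.1 hempty x) ⟨hxC, hxu, hxv⟩⟩
  have hyB : y ∈ B := ⟨hyC, fun hyu => (eq_empty_iff_forall_notMem.1 hempty y) ⟨hyC, hyu, hyv⟩⟩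
  obtain ⟨z, hz1, hz2, hz3⟩ := hco N u' v' hu' hv' hN ⟨x, hCK N hxC, hAu' hxA⟩ ⟨y, hCK N hyC, hBv' hyB⟩
  exact (hdisj'.le_bot ⟨hz2, hz3⟩ : False)

lemma closure_component_inter {W : Set ℂ} (hW : IsOpen W) {p z : ℂ}
    (hz : z ∈ W) (hcl : z ∈ closure (connectedComponentIn W p)) :
    z ∈ connectedComponentIn W p := by
  have hV' : IsOpen (connectedComponentIn W z) := hW.connectedComponentIn
  have hzV' : z ∈ connectedComponentIn W z := mem_connectedComponentIn hz
  obtain ⟨q, hq1, hq2⟩ := _root_.mem_closure_iff.1 hcl _ hV' hzV'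
  rw [connectedComponentIn_eq hq2, ← connectedComponentIn_eq hq1]
  exact hzV'

set_option maxHeartbeats 1000000 in
/-- Local picture near a regular point on the level set. -/
lemma local_picture (P : Polynomial ℂ) {z : ℂ} (h' : P.derivative.eval z ≠ 0)
    {t : ℝ} (ht : 0 < t) (hz : ‖P.eval z‖ ≤ t) :
    ∃ Ω : Set ℂ, IsOpen Ω ∧ z ∈ Ω ∧
      IsPreconnected (Ω ∩ {x | ‖P.eval x‖ < t}) ∧
      (Ω ∩ {x | ‖P.eval x‖ ≤ t}) ⊆ closure (Ω ∩ {x | ‖P.eval x‖ < t}) := by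
  set f : ℂ → ℂ := fun x => P.eval x with hf
  have hs : HasStrictDerivAt f (P.derivative.eval z) z := P.hasStrictDerivAt z
  set e : OpenPartialHomeomorph ℂ ℂ := (hs.hasStrictFDerivAt_equiv h').toOpenPartialHomeomorph f with he
  have hecoe : (e : ℂ → ℂ) = f := (hs.hasStrictFDerivAt_equiv h').toOpenPartialHomeomorph_coe
  have hzsrc : z ∈ e.source := (hs.hasStrictFDerivAt_equiv h').mem_toOpenPartialHomeomorph_source
  have hfz : f z ∈ e.target := by
    rw [← hecoe]; exact e.map_source hzsrc
  obtain ⟨δ, hδ, hball⟩ := Metric.isOpen_iff.1 e.open_target (f z) hfz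
  set B' : Set ℂ := Metric.ball (f z) δ with hB'
  have hfc : Continuous f := P.continuous
  set Ω : Set ℂ := e.source ∩ f ⁻¹' B' with hΩ
  have hΩopen : IsOpen Ω := e.open_source.inter (hfc.isOpen_preimage _ Metric.isOpen_ball)
  have hzΩ : z ∈ Ω := ⟨hzsrc, Metric.mem_ball_self hδ⟩
  have key : Ω ∩ {x | ‖f x‖ < t} = e.symm '' (B' ∩ Metric.ball 0 t) := by
    ext x
    constructor
    · rintro ⟨⟨hx1, hx2⟩, hx3⟩
      refine ⟨f x, ⟨hx2, by simpa using hx3⟩, ?_⟩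
      rw [← hecoe]; exact e.left_inv hx1
    · rintro ⟨w, ⟨hw1, hw2⟩, rfl⟩
      have hwt : w ∈ e.target := hball hw1
      have hfw : f (e.symm w) = w := by rw [← hecoe]; exact e.right_inv hwt
      refine ⟨⟨e.map_target hwt, ?_⟩, ?_⟩
      · simpa [hfw] using hw1
      · simp only [Set.mem_setOf_eq, hfw]
        simpa using hw2
  refine ⟨Ω, hΩopen, hzΩ, ?_, ?_⟩
  · rw [key]
    have hconv : Convex ℝ (B' ∩ Metric.ball (0:ℂ) t) :=
      (convex_ball _ _).inter (convex_ball _ _)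
    exact hconv.isPreconnected.image _ (e.continuousOn_symm.mono
      (fun w hw => hball hw.1))
  · rintro x ⟨hxΩ, hxle⟩
    set w : ℂ := f x with hw
    have hwB' : w ∈ B' := hxΩ.2
    have hwle : ‖w‖ ≤ t := hxle
    -- sequence (1 - 1/(n+1)) • w
    set u : ℕ → ℂ := fun n => (1 - (1:ℝ)/(n+1)) • w with hu
    have hulim : Tendsto u atTop (𝓝 w) := by
      rw [hu]
      have h1 : Tendsto (fun n : ℕ => 1 - (1:ℝ)/(n+1)) atTop (𝓝 1) := by
        have := tendsto_one_div_add_atTop_nhds_zero_nat (𝕜 := ℝ)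
        simpa using (tendsto_const_nhds (x := (1:ℝ))).sub this
      have := h1.smul_const w
      simpa using this
    have hunorm : ∀ n, ‖u n‖ < t := by
      intro n
      have h0 : (0:ℝ) ≤ 1 - 1/(n+1) := by
        have : (1:ℝ)/(n+1) ≤ 1 := by
          rw [div_le_one (by positivity)]
          linarith [Nat.cast_nonneg (α := ℝ) n]
        linarith
      have h1 : (1:ℝ) - 1/(n+1) < 1 := by
        have : (0:ℝ) < 1/(n+1) := by positivity
        linarith
      rw [hu]
      simp only [norm_smul, Real.norm_eq_abs, abs_of_nonneg h0]
      by_cases hw0 : w = 0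
      · simpa [hw0] using ht
      · calc (1 - 1/(n+1)) * ‖w‖ < 1 * ‖w‖ := by
              apply mul_lt_mul_of_pos_right h1 (norm_pos_iff.2 hw0)
          _ = ‖w‖ := one_mul _
          _ ≤ t := hwle
    have huB' : ∀ᶠ n in atTop, u n ∈ B' := hulim.eventually (Metric.isOpen_ball.mem_nhds hwB')
    have hxn : Tendsto (fun n => e.symm (u n)) atTop (𝓝 x) := by
      have hcont : ContinuousAt e.symm w := e.continuousAt_symm (hball hwB')
      have : Tendsto (fun n => e.symm (u n)) atTop (𝓝 (e.symm w)) := hcont.tendsto.comp hulim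
      have hxw : e.symm w = x := by
        rw [hw, ← hecoe]; exact e.left_inv hxΩ.1
      rwa [hxw] at this
    apply mem_closure_of_tendsto hxn
    filter_upwards [huB'] with n hn
    rw [key]
    exact ⟨u n, ⟨hn, by simpa using hunorm n⟩, rfl⟩

lemma sublevel_compact (P : Polynomial ℂ) (hdeg : 0 < P.degree) (c : ℝ) :
    IsCompact {z : ℂ | ‖P.eval z‖ ≤ c} := by
  have ht : Tendsto (fun x : ℂ => ‖P.eval x‖) (Filter.cocompact ℂ) atTop :=
    P.tendsto_norm_atTop hdeg tendsto_norm_cocompact_atTop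
  have hev : {x : ℂ | c < ‖P.eval x‖} ∈ Filter.cocompact ℂ := ht.eventually_gt_atTop c
  rw [Filter.mem_cocompact] at hev
  obtain ⟨K, hK, hKsub⟩ := hev
  have hclosed : IsClosed {z : ℂ | ‖P.eval z‖ ≤ c} :=
    isClosed_le (P.continuous.norm) continuous_const
  apply hK.of_isClosed_subset hclosed
  intro z hz
  by_contra hzK
  exact absurd hz (by simpa using not_le.2 (hKsub hzK))


lemma exists_zero (P : Polynomial ℂ) (hdeg : 0 < P.degree)
    (z₀ : ℂ) (hz₀ : ‖P.eval z₀‖ ≤ 1) (E : Set ℂ)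
    (hE : E = connectedComponentIn {z : ℂ | ‖P.eval z‖ ≤ 1} z₀)
    (hcrit : ∀ ζ ∈ E, P.derivative.eval ζ = 0 → P.eval ζ = 0) :
    ∃ a ∈ E, P.eval a = 0 := by
  set S : Set ℂ := {z : ℂ | ‖P.eval z‖ ≤ 1} with hS
  have hScl : IsClosed S := isClosed_le (P.continuous.norm) continuous_const
  have hz₀S : z₀ ∈ S := hz₀
  have hES : E ⊆ S := hE ▸ connectedComponentIn_subset _ _
  have hz₀E : z₀ ∈ E := hE ▸ mem_connectedComponentIn hz₀S
  have hEpre : IsPreconnected E := hE ▸ isPreconnected_connectedComponentIn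
  have hEcl : IsClosed E := by
    rw [← closure_subset_iff_isClosed]
    nth_rewrite 2 [hE]
    exact IsPreconnected.subset_connectedComponentIn hEpre.closure
      (subset_closure hz₀E) (hScl.closure_subset_iff.2 hES)
  have hEcomp : IsCompact E := (sublevel_compact P hdeg 1).of_isClosed_subset hEcl hES
  obtain ⟨a, haE, hamin⟩ := hEcomp.exists_isMinOn ⟨z₀, hz₀E⟩ (P.continuous.norm.continuousOn)
  refine ⟨a, haE, ?_⟩
  by_contra ha0
  have hμpos : 0 < ‖P.eval a‖ := norm_pos_iff.2 ha0
  have ha' : P.derivative.eval a ≠ 0 := fun h => ha0 (hcrit a haE h)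
  obtain ⟨Ω, hΩopen, haΩ, hΩpre, hΩsub⟩ := local_picture P ha' hμpos le_rfl
  set G := Ω ∩ {x : ℂ | ‖P.eval x‖ < ‖P.eval a‖} with hG
  have hacl : a ∈ closure G := hΩsub ⟨haΩ, show ‖P.eval a‖ ≤ ‖P.eval a‖ from le_rfl⟩
  have hCpre : IsPreconnected (insert a G) := hΩpre.subset_closure (subset_insert a G)
    (insert_subset hacl subset_closure)
  have hμ1 : ‖P.eval a‖ ≤ 1 := hES haE
  have hCS : insert a G ⊆ S := by
    rintro x (rfl | hx)
    · exact hES haE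
    · exact le_trans (le_of_lt hx.2) hμ1
  have hCE : insert a G ⊆ E := by
    have h1 : E = connectedComponentIn S a := by
      rw [hE]; exact connectedComponentIn_eq (hE ▸ haE)
    rw [h1]
    exact hCpre.subset_connectedComponentIn (mem_insert a G) hCS
  have hGne : G.Nonempty := by
    by_contra h
    rw [not_nonempty_iff_eq_empty] at h
    rw [h, closure_empty] at hacl
    exact hacl
  obtain ⟨x, hxG⟩ := hGne
  exact absurd (isMinOn_iff.1 hamin x (hCE (mem_insert_of_mem a hxG))) (not_le.2 hxG.2)

lemma zeros_eq (P : Polynomial ℂ) (hdeg : 0 < P.degree)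
    (z₀ : ℂ) (E : Set ℂ)
    (hE : E = connectedComponentIn {z : ℂ | ‖P.eval z‖ ≤ 1} z₀)
    (hcrit : ∀ ζ ∈ E, P.derivative.eval ζ = 0 → P.eval ζ = 0)
    {a b : ℂ} (ha : a ∈ E) (ha0 : P.eval a = 0) (hb : b ∈ E) (hb0 : P.eval b = 0) :
    a = b := by
  by_contra hab
  set S : Set ℂ := {z : ℂ | ‖P.eval z‖ ≤ 1} with hS
  set W : ℝ → Set ℂ := fun t => {z : ℂ | ‖P.eval z‖ < t} with hW
  have hWopen : ∀ t, IsOpen (W t) := fun t =>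
    isOpen_lt (P.continuous.norm) continuous_const
  have hWmono : ∀ {s t : ℝ}, s ≤ t → W s ⊆ W t := fun hst z hz => lt_of_lt_of_le hz hst
  have haW : ∀ {t : ℝ}, 0 < t → a ∈ W t := fun htpos => by simp [hW, ha0, htpos]
  have hES : E ⊆ S := hE ▸ connectedComponentIn_subset _ _
  have hEpre : IsPreconnected E := hE ▸ isPreconnected_connectedComponentIn
  have hEa : E = connectedComponentIn S a := by
    rw [hE]; exact connectedComponentIn_eq (hE ▸ ha)
  set T : Set ℝ := {t : ℝ | b ∈ connectedComponentIn (W t) a} with hT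
  -- T is upward closed
  have hTup : ∀ s ∈ T, ∀ t, s ≤ t → t ∈ T := fun s hs t hst =>
    connectedComponentIn_mono a (hWmono hst) hs
  -- everything above 1 is in T
  have hT2 : ∀ t : ℝ, 1 < t → t ∈ T := by
    intro t ht
    have hsub : E ⊆ W t := fun z hz => lt_of_le_of_lt (hES hz) ht
    exact hEpre.subset_connectedComponentIn ha hsub hb
  -- the lower bound δ
  have hPne : P ≠ 0 := fun h => by simp [h] at hdeg
  have hroots : ({x : ℂ | P.IsRoot x}).Finite := P.finite_setOf_isRoot hPne
  have hFfin : ((fun ρ => dist a ρ) '' {x : ℂ | P.IsRoot x}).Finite := hroots.image _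
  have hdistab : 0 < dist a b := dist_pos.2 hab
  obtain ⟨r, hr⟩ := ((Set.Ioo_infinite hdistab).diff hFfin).nonempty
  obtain ⟨⟨hr0, hrab⟩, hrF⟩ := hr
  have hsph_ne : (Metric.sphere a r).Nonempty := NormedSpace.sphere_nonempty.2 hr0.le
  obtain ⟨p, hp, hpmin⟩ := (isCompact_sphere a r).exists_isMinOn hsph_ne
    (P.continuous.norm.continuousOn)
  set δ : ℝ := ‖P.eval p‖ with hδ
  have hδpos : 0 < δ := by
    rw [hδ, norm_pos_iff]
    intro hp0
    exact hrF ⟨p, hp0, by rw [Metric.mem_sphere] at hp; rw [dist_comm] at hp; exact hp⟩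
  have hδT : ∀ t ∈ T, δ < t := by
    intro t htT
    by_contra hle
    push_neg at hle
    set C : Set ℂ := connectedComponentIn (W t) a with hC
    have hbC : b ∈ C := htT
    have haWt : a ∈ W t := connectedComponentIn_nonempty_iff.1 ⟨b, hbC⟩
    have htpos : 0 < t := by simpa [hW, ha0] using haWt
    have hCpre : IsPreconnected C := isPreconnected_connectedComponentIn
    have hCsub : C ⊆ W t := connectedComponentIn_subset _ _
    have hCsph : ∀ x ∈ C, x ∉ Metric.sphere a r := by
      intro x hx hxs
      have h1 : ‖P.eval x‖ < t := hCsub hx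
      have h2 : δ ≤ ‖P.eval x‖ := hpmin hxs
      linarith
    have hcov : C ⊆ Metric.ball a r ∪ (Metric.closedBall a r)ᶜ := by
      intro x hx
      rcases lt_trichotomy (dist x a) r with h | h | h
      · exact Or.inl h
      · exact absurd (Metric.mem_sphere.2 h) (hCsph x hx)
      · exact Or.inr (by simp [Metric.mem_closedBall]; linarith)
    have hCa : a ∈ C ∩ Metric.ball a r := ⟨mem_connectedComponentIn haWt, Metric.mem_ball_self hr0⟩
    have hCb : b ∈ C ∩ (Metric.closedBall a r)ᶜ := by
      refine ⟨hbC, ?_⟩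
      simp only [mem_compl_iff, Metric.mem_closedBall, not_le]
      rw [dist_comm]; exact hrab
    obtain ⟨x, _, hx1, hx2⟩ := hCpre _ _ Metric.isOpen_ball
      (Metric.isClosed_closedBall.isOpen_compl) hcov ⟨a, hCa⟩ ⟨b, hCb⟩
    exact hx2 (Metric.ball_subset_closedBall hx1)
  have hTne : T.Nonempty := ⟨2, hT2 2 one_lt_two⟩
  have hTbdd : BddBelow T := ⟨δ, fun t ht => (hδT t ht).le⟩
  set t₀ : ℝ := sInf T with ht₀
  have ht₀pos : 0 < t₀ := lt_of_lt_of_le hδpos (le_csInf hTne fun t ht => (hδT t ht).le)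
  have ht₀le1 : t₀ ≤ 1 := by
    apply le_of_forall_pos_le_add
    intro ε hε
    exact csInf_le hTbdd (hT2 (1 + ε) (by linarith))
  have hmemT : ∀ t, t₀ < t → t ∈ T := by
    intro t htt
    obtain ⟨s, hsT, hst⟩ := exists_lt_of_csInf_lt hTne htt
    exact hTup s hsT t hst.le
  -- the nested intersection D
  set tseq : ℕ → ℝ := fun n => t₀ + 1/(n+1) with htseq
  have htseq_pos : ∀ n, 0 < tseq n := fun n => by positivity
  have htseq_gt : ∀ n, t₀ < tseq n := fun n => by
    simp only [htseq, lt_add_iff_pos_right]; positivity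
  have htseq_anti : ∀ n, tseq (n+1) ≤ tseq n := by
    intro n
    simp only [htseq, add_le_add_iff_left]
    apply div_le_div_of_nonneg_left one_pos.le (by positivity) -- may need fixing
    push_cast; linarith
  have htseq_le2 : ∀ n, tseq n ≤ 2 := by
    intro n
    have : (1:ℝ)/(n+1) ≤ 1 := by
      rw [div_le_one (by positivity)]; push_cast; linarith [Nat.cast_nonneg (α := ℝ) n]
    simp only [htseq]; linarith
  have htseq_lim : Tendsto tseq atTop (𝓝 t₀) := by
    rw [htseq]
    have := tendsto_one_div_add_atTop_nhds_zero_nat (𝕜 := ℝ)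
    simpa using (tendsto_const_nhds (x := t₀)).add this
  set Dseq : ℕ → Set ℂ := fun n => closure (connectedComponentIn (W (tseq n)) a) with hDseq
  have hDseq_sub : ∀ n, Dseq n ⊆ {z : ℂ | ‖P.eval z‖ ≤ tseq n} := by
    intro n
    apply closure_minimal
    · exact (connectedComponentIn_subset _ _).trans (fun z hz => show ‖P.eval z‖ ≤ tseq n from le_of_lt hz)
    · exact isClosed_le (P.continuous.norm) continuous_const
  have hDseq_comp : ∀ n, IsCompact (Dseq n) := by
    intro n
    apply (sublevel_compact P hdeg 2).of_isClosed_subset isClosed_closure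
    exact (hDseq_sub n).trans (fun z hz => le_trans hz (htseq_le2 n))
  have hDseq_cl : ∀ n, IsClosed (Dseq n) := fun n => isClosed_closure
  have hDseq_pre : ∀ n, IsPreconnected (Dseq n) :=
    fun n => isPreconnected_connectedComponentIn.closure
  have haDseq : ∀ n, a ∈ Dseq n :=
    fun n => subset_closure (mem_connectedComponentIn (haW (htseq_pos n)))
  have hbDseq : ∀ n, b ∈ Dseq n :=
    fun n => subset_closure (hmemT _ (htseq_gt n))
  have hDseq_ne : ∀ n, (Dseq n).Nonempty := fun n => ⟨a, haDseq n⟩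
  have hDseq_anti : ∀ n, Dseq (n+1) ⊆ Dseq n := fun n =>
    closure_mono (connectedComponentIn_mono a (hWmono (htseq_anti n)))
  set D : Set ℂ := ⋂ n, Dseq n with hD
  have hDpre : IsPreconnected D :=
    nested_connected_inter hDseq_comp hDseq_cl hDseq_pre hDseq_ne hDseq_anti
  have haD : a ∈ D := mem_iInter.2 haDseq
  have hbD : b ∈ D := mem_iInter.2 hbDseq
  have hDle : D ⊆ {z : ℂ | ‖P.eval z‖ ≤ t₀} := by
    intro z hz
    have h1 : ∀ n, ‖P.eval z‖ ≤ tseq n := fun n => hDseq_sub n (mem_iInter.1 hz n)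
    exact ge_of_tendsto' htseq_lim h1
  have hDE : D ⊆ E := by
    rw [hEa]
    apply hDpre.subset_connectedComponentIn haD
    intro z hz
    exact le_trans (hDle hz) ht₀le1
  -- V and the clopen argument
  set V : Set ℂ := connectedComponentIn (W t₀) a with hV
  have haV : a ∈ V := mem_connectedComponentIn (haW ht₀pos)
  have hVsub : V ⊆ W t₀ := connectedComponentIn_subset _ _
  have hbV : b ∈ V := by
    by_contra hbV'
    have hbncl : b ∉ closure V := by
      intro hbcl
      exact hbV' (closure_component_inter (hWopen t₀) (haW ht₀pos |> fun _ => by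
        simp [hW, hb0, ht₀pos]) hbcl)
    -- the two unions
    set U₁ : Set ℂ := ⋃₀ {Ω : Set ℂ | IsOpen Ω ∧ D ∩ Ω ⊆ closure V} with hU₁
    set U₂ : Set ℂ := ⋃₀ {Ω : Set ℂ | IsOpen Ω ∧ D ∩ Ω ∩ closure V = ∅} with hU₂
    have hU₁open : IsOpen U₁ := isOpen_sUnion (fun Ω hΩ => hΩ.1)
    have hU₂open : IsOpen U₂ := isOpen_sUnion (fun Ω hΩ => hΩ.1)
    have hdisj : D ∩ (U₁ ∩ U₂) = ∅ := by
      apply eq_empty_iff_forall_notMem.2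
      rintro z ⟨hzD, ⟨Ω₁, hΩ₁, hzΩ₁⟩, ⟨Ω₂, hΩ₂, hzΩ₂⟩⟩
      have hz1 : z ∈ closure V := hΩ₁.2 ⟨hzD, hzΩ₁⟩
      exact eq_empty_iff_forall_notMem.1 hΩ₂.2 z ⟨⟨hzD, hzΩ₂⟩, hz1⟩
    have hcov : D ⊆ U₁ ∪ U₂ := by
      intro z hzD
      have hzle : ‖P.eval z‖ ≤ t₀ := hDle hzD
      rcases lt_or_eq_of_le hzle with hlt | heq
      · -- interior case
        set V' : Set ℂ := connectedComponentIn (W t₀) z with hV'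
        have hzV' : z ∈ V' := mem_connectedComponentIn hlt
        have hV'open : IsOpen V' := (hWopen t₀).connectedComponentIn
        by_cases hq : (V' ∩ closure V) = ∅
        · exact Or.inr ⟨V', ⟨hV'open, by
            rw [← Set.subset_empty_iff, ← hq]
            exact fun x hx => ⟨hx.1.2, hx.2⟩⟩, hzV'⟩
        · obtain ⟨q, hq1, hq2⟩ := nonempty_iff_ne_empty.2 hq
          have hqV : q ∈ V := closure_component_inter (hWopen t₀)
            (connectedComponentIn_subset _ _ hq1) hq2
          have hV'V : V' = V := by
            rw [hV', connectedComponentIn_eq hq1, hV, connectedComponentIn_eq hqV]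
          exact Or.inl ⟨V, ⟨(hWopen t₀).connectedComponentIn,
            fun x hx => subset_closure hx.2⟩, hV'V ▸ hzV'⟩
      · -- boundary case
        have hzE : z ∈ E := hDE hzD
        have hz0 : P.eval z ≠ 0 := by
          intro h0
          rw [h0] at heq
          simp only [norm_zero] at heq
          exact absurd heq.symm (ne_of_gt ht₀pos)
        have hz' : P.derivative.eval z ≠ 0 := fun h => hz0 (hcrit z hzE h)
        obtain ⟨Ω, hΩopen, hzΩ, hΩpre, hΩsub⟩ := local_picture P hz' ht₀pos hzle
        by_cases hq : (Ω ∩ V) = ∅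
        · refine Or.inr ⟨Ω, ⟨hΩopen, ?_⟩, hzΩ⟩
          apply eq_empty_iff_forall_notMem.2
          rintro x ⟨⟨hxD, hxΩ⟩, hxcl⟩
          obtain ⟨q, hq1, hq2⟩ := _root_.mem_closure_iff.1 hxcl Ω hΩopen hxΩ
          exact eq_empty_iff_forall_notMem.1 hq q ⟨hq1, hq2⟩
        · obtain ⟨p', hp'1, hp'2⟩ := nonempty_iff_ne_empty.2 hq
          have hsub2 : Ω ∩ W t₀ ⊆ V := by
            have h1 : connectedComponentIn (W t₀) p' = V := by
              rw [hV, connectedComponentIn_eq hp'2]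
            rw [← h1]
            exact hΩpre.subset_connectedComponentIn ⟨hp'1, hVsub hp'2⟩
              (fun x hx => hx.2)
          refine Or.inl ⟨Ω, ⟨hΩopen, ?_⟩, hzΩ⟩
          intro x hx
          have : x ∈ Ω ∩ {y : ℂ | ‖P.eval y‖ ≤ t₀} := ⟨hx.2, hDle hx.1⟩
          exact closure_mono hsub2 (hΩsub this)
    have haU₁ : a ∈ U₁ := ⟨V, ⟨(hWopen t₀).connectedComponentIn,
      fun x hx => subset_closure hx.2⟩, haV⟩
    have hbU₂ : b ∈ U₂ := by
      set V'' : Set ℂ := connectedComponentIn (W t₀) b with hV''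
      have hbW : b ∈ W t₀ := by simp [hW, hb0, ht₀pos]
      have hbV'' : b ∈ V'' := mem_connectedComponentIn hbW
      by_cases hq : (V'' ∩ closure V) = ∅
      · exact ⟨V'', ⟨(hWopen t₀).connectedComponentIn, by
          rw [← Set.subset_empty_iff, ← hq]
          exact fun x hx => ⟨hx.1.2, hx.2⟩⟩, hbV''⟩
      · obtain ⟨q, hq1, hq2⟩ := nonempty_iff_ne_empty.2 hq
        have hqV : q ∈ V := closure_component_inter (hWopen t₀)
          (connectedComponentIn_subset _ _ hq1) hq2
        have : V'' = V := by
          rw [hV'', connectedComponentIn_eq hq1, hV, connectedComponentIn_eq hqV]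
        exact absurd (this ▸ hbV'') hbV'
    obtain ⟨x, hx⟩ := hDpre U₁ U₂ hU₁open hU₂open hcov ⟨a, haD, haU₁⟩ ⟨b, hbD, hbU₂⟩
    rw [← Set.inter_assoc] at hdisj
    exact eq_empty_iff_forall_notMem.1 hdisj x ⟨⟨hx.1, hx.2.1⟩, hx.2.2⟩
  -- final step : path from a to b inside V gives smaller t in T
  have hVopen : IsOpen V := (hWopen t₀).connectedComponentIn
  have hVconn : IsConnected V := ⟨⟨a, haV⟩, isPreconnected_connectedComponentIn⟩
  have hVpath : IsPathConnected V := hVopen.isConnected_iff_isPathConnected.1 hVconn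
  obtain ⟨γ, hγ⟩ := hVpath.joinedIn a haV b hbV
  set K : Set ℂ := Set.range γ with hK
  have hKcomp : IsCompact K := isCompact_range γ.continuous
  have hKne : K.Nonempty := ⟨a, 0, γ.source⟩
  have hKV : K ⊆ V := by rintro x ⟨s, rfl⟩; exact hγ s
  obtain ⟨x₀, hx₀K, hx₀max⟩ := hKcomp.exists_isMaxOn hKne (P.continuous.norm.continuousOn)
  set m : ℝ := ‖P.eval x₀‖ with hm
  have hmlt : m < t₀ := hVsub (hKV hx₀K)
  set t' : ℝ := (m + t₀)/2 with ht'
  have hmt' : m < t' := by rw [ht']; linarith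
  have ht'lt : t' < t₀ := by rw [ht']; linarith
  have hKW : K ⊆ W t' := fun x hx => lt_of_le_of_lt (hx₀max hx) hmt'
  have hKpre : IsPreconnected K := (isPreconnected_univ.image γ
    (γ.continuous.continuousOn)).subset_closure (by rw [Set.image_univ]) (by
      rw [Set.image_univ]; exact subset_closure)
  have ht'T : t' ∈ T := by
    have haK : a ∈ K := ⟨0, γ.source⟩
    have hbK : b ∈ K := ⟨1, γ.target⟩
    exact hKpre.subset_connectedComponentIn haK hKW hbK
  exact absurd (csInf_le hTbdd ht'T) (not_le.2 ht'lt)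

theorem lemniscate_component_unique_zero
    (n : ℕ) (hn : 1 ≤ n) (P : Polynomial ℂ) (hdeg : P.natDegree = n)
    (z₀ : ℂ) (hz₀ : ‖P.eval z₀‖ ≤ 1)
    (E : Set ℂ) (hE : E = connectedComponentIn {z : ℂ | ‖P.eval z‖ ≤ 1} z₀)
    (hcrit : ∀ ζ ∈ E, P.derivative.eval ζ = 0 → P.eval ζ = 0) :
    ∃! a : ℂ, a ∈ E ∧ P.eval a = 0 := by
  have habs : {z : ℂ | ‖P.eval z‖ ≤ 1} = {z : ℂ | ‖P.eval z‖ ≤ 1} := by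
    rfl
  have hdegpos : 0 < P.degree := by
    apply Polynomial.natDegree_pos_iff_degree_pos.1
    rw [hdeg]
    exact hn
  have hz₀' : ‖P.eval z₀‖ ≤ 1 := by exact hz₀
  have hE' : E = connectedComponentIn {z : ℂ | ‖P.eval z‖ ≤ 1} z₀ := by rw [hE]
  obtain ⟨a, haE, ha0⟩ := exists_zero P hdegpos z₀ hz₀' E hE' hcrit
  refine ⟨a, ⟨haE, ha0⟩, ?_⟩
  rintro y ⟨hyE, hy0⟩
  exact zeros_eq P hdegpos z₀ E hE' hcrit hyE hy0 haE ha0
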